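/- Let a, b, c, d, e, f, g, h be distinct indeterminates and consider the binary quasi-matrix with rows (a,b,-,-), (c,d,-,-), (-,-,e,f), (-,-,g,h) (dashes denote empty positions). Then both adeh − bcgf and adgf − bceh are binary quasi-determinants of this quasi-matrix, and they are not equal up to sign; in particular, binary quasi-determinants of a binary n×n quasi-matrix with n ≥ 4 are not unique up to sign. -/

import Mathlib

open MvPolynomial

/-- `x` is a binary quasi-determinant of the `n × n` quasi-matrix `e` (entries `Option`-valued,
`none` meaning an empty position): there are permutations `σ, τ` with `σ l ≠ τ l` for all `l`,
all positions `(l, σ l)` and `(l, τ l)` are occupied, and `x` is the difference of the two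
corresponding products of entries. -/
def IsBinaryQuasiDet {S : Type*} [CommRing S] {n : ℕ}
    (e : Fin n → Fin n → Option S) (x : S) : Prop :=
  ∃ σ τ : Equiv.Perm (Fin n), (∀ l, σ l ≠ τ l) ∧
    ∃ v w : Fin n → S,
      (∀ l, e l (σ l) = some (v l)) ∧ (∀ l, e l (τ l) = some (w l)) ∧
      x = ∏ l, v l - ∏ l, w l

/-- For the binary quasi-matrix with rows `(a,b,-,-), (c,d,-,-), (-,-,e,f), (-,-,g,h)` in
distinct indeterminates (here `a = X 0, …, h = X 7`), both `adeh − bcgf` and `adgf − bceh`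
are binary quasi-determinants, and they are not equal even up to sign: binary
quasi-determinants of an `n × n` binary quasi-matrix with `n ≥ 4` are not unique up to sign. -/
theorem stmt16 :
    let x : Fin 8 → MvPolynomial (Fin 8) ℤ := X
    let Q : Fin 4 → Fin 4 → Option (MvPolynomial (Fin 8) ℤ) :=
      ![![some (x 0), some (x 1), none, none],
        ![some (x 2), some (x 3), none, none],
        ![none, none, some (x 4), some (x 5)],
        ![none, none, some (x 6), some (x 7)]]
    -- each nonempty row and column of `Q` has exactly two entries (it is binary)
    (∀ i, (Finset.univ.filter fun j => Q i j ≠ none).card = 2) ∧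
    (∀ j, (Finset.univ.filter fun i => Q i j ≠ none).card = 2) ∧
    IsBinaryQuasiDet Q (x 0 * x 3 * x 4 * x 7 - x 1 * x 2 * x 6 * x 5) ∧
    IsBinaryQuasiDet Q (x 0 * x 3 * x 6 * x 5 - x 1 * x 2 * x 4 * x 7) ∧
    x 0 * x 3 * x 4 * x 7 - x 1 * x 2 * x 6 * x 5 ≠
      x 0 * x 3 * x 6 * x 5 - x 1 * x 2 * x 4 * x 7 ∧
    x 0 * x 3 * x 4 * x 7 - x 1 * x 2 * x 6 * x 5 ≠
      -(x 0 * x 3 * x 6 * x 5 - x 1 * x 2 * x 4 * x 7) := by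
  intro x Q
  have hp : ∀ q : MvPolynomial (Fin 8) ℤ,
      eval (![1, 0, 0, 1, 1, 0, 0, 1] : Fin 8 → ℤ) q = eval ![1,0,0,1,1,0,0,1] q :=
    fun _ => rfl
  refine ⟨?_, ?_, ?_, ?_, ?_, ?_⟩
  · intro i; fin_cases i <;> decide
  · intro j; fin_cases j <;> decide
  · refine ⟨1, Equiv.swap 0 1 * Equiv.swap 2 3, by decide,
      ![x 0, x 3, x 4, x 7], ![x 1, x 2, x 5, x 6], ?_, ?_, ?_⟩
    · intro l; fin_cases l <;> rfl
    · intro l; fin_cases l <;> rfl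
    · simp [Fin.prod_univ_four]; ring
  · refine ⟨Equiv.swap 2 3, Equiv.swap 0 1, by decide,
      ![x 0, x 3, x 5, x 6], ![x 1, x 2, x 4, x 7], ?_, ?_, ?_⟩
    · intro l; fin_cases l <;> rfl
    · intro l; fin_cases l <;> rfl
    · simp [Fin.prod_univ_four]; ring
  · intro h
    have := congrArg (eval (![1, 0, 0, 1, 1, 0, 0, 1] : Fin 8 → ℤ)) h
    simp [x] at this
  · intro h
    have := congrArg (eval (![1, 0, 0, 1, 1, 0, 0, 1] : Fin 8 → ℤ)) h
    simp [x] at this
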